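/- (i) For every finite simple graph G and every set E' of edges of G, if the number of vertices incident to at least one edge of E' is strictly less than |E'|, then |E'| ≥ 5. (ii) For every r ≥ 4, the complete graph K_r contains a set of 5 edges incident to only 4 vertices (e.g., all edges among 4 fixed vertices minus one). Consequently, for the vertex–edge incidence matrix B of K_r with r ≥ 4 (a binary matrix with rows indexed by vertices and columns by edges), the minimum cardinality of a set J of columns with a(J) < |J| equals 5; hence the ultimate distance of the LDPC base matrix B is d_u(B) = 5. -/

import Mathlib

open Finset

lemma part_i (V : Type) [Fintype V] [DecidableEq V] (G : SimpleGraph V)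
    (E' : Finset (Sym2 V)) (hE : ↑E' ⊆ G.edgeSet)
    (h : (Finset.univ.filter fun v : V => ∃ e ∈ E', v ∈ e).card < E'.card) :
    5 ≤ E'.card := by
  set A : Finset V := Finset.univ.filter fun v : V => ∃ e ∈ E', v ∈ e with hA
  have hsub : E' ⊆ A.sym2 := by
    intro e he
    rw [Finset.mem_sym2_iff]
    intro v hv
    simp only [hA, Finset.mem_filter, Finset.mem_univ, true_and]
    exact ⟨e, he, hv⟩
  have hdiagsub : A.image Sym2.diag ⊆ A.sym2 := by
    intro e he
    rw [Finset.mem_image] at he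
    obtain ⟨a, ha, rfl⟩ := he
    exact Finset.diag_mem_sym2_iff.2 ha
  have hdisj : Disjoint E' (A.image Sym2.diag) := by
    rw [Finset.disjoint_left]
    intro e he he'
    rw [Finset.mem_image] at he'
    obtain ⟨a, _, rfl⟩ := he'
    exact G.not_isDiag_of_mem_edgeSet (hE he) (Sym2.diag_isDiag a)
  have hcard : E'.card + A.card ≤ (A.card + 1).choose 2 := by
    have := Finset.card_le_card (Finset.union_subset hsub hdiagsub)
    rwa [Finset.card_union_of_disjoint hdisj, Finset.card_sym2,
      Finset.card_image_of_injective _ Sym2.diag_injective] at this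
  by_cases h4 : 4 ≤ A.card
  · omega
  · push_neg at h4
    interval_cases hAc : A.card <;> norm_num [Nat.choose] at hcard ⊢ <;>
      first | omega | simp [hcard] at h

lemma part_ii (r : ℕ) (hr : 4 ≤ r) :
    ∃ E' : Finset (Sym2 (Fin r)), ↑E' ⊆ (⊤ : SimpleGraph (Fin r)).edgeSet ∧
      E'.card = 5 ∧
      (Finset.univ.filter fun v : Fin r => ∃ e ∈ E', v ∈ e).card = 4 := by
  have f : Fin 4 ↪ Fin r := Fin.castLEEmb hr
  set E₀ : Finset (Sym2 (Fin 4)) :=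
    {s(0,1), s(0,2), s(0,3), s(1,2), s(1,3)} with hE₀
  refine ⟨E₀.image (Sym2.map f), ?_, ?_, ?_⟩
  · intro e he
    simp only [Finset.coe_image, Set.mem_image, Finset.mem_coe] at he
    obtain ⟨e₀, he₀, rfl⟩ := he
    rw [SimpleGraph.edgeSet_top, Set.mem_compl_iff, Sym2.mem_diagSet, Sym2.isDiag_map f.injective]
    revert he₀; revert e₀; decide
  · rw [Finset.card_image_of_injective _ (Sym2.map.injective f.injective)]
    decide
  · have : (Finset.univ.filter fun v : Fin r => ∃ e ∈ E₀.image (Sym2.map f), v ∈ e)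
        = (Finset.univ.filter fun w : Fin 4 => ∃ e ∈ E₀, w ∈ e).image f := by
      ext v
      simp only [Finset.mem_filter, Finset.mem_univ, true_and, Finset.mem_image,
        Sym2.mem_map]
      constructor
      · rintro ⟨e, ⟨e₀, he₀, rfl⟩, hv⟩
        rw [Sym2.mem_map] at hv
        obtain ⟨w, hw, rfl⟩ := hv
        exact ⟨w, ⟨e₀, he₀, hw⟩, rfl⟩
      · rintro ⟨w, ⟨e₀, he₀, hw⟩, rfl⟩
        exact ⟨Sym2.map f e₀, ⟨e₀, he₀, rfl⟩, Sym2.mem_map.2 ⟨w, hw, rfl⟩⟩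
    rw [this, Finset.card_image_of_injective _ f.injective]
    decide

theorem complete_graph_incidence_ultimate_distance :
    (∀ (V : Type) [Fintype V] [DecidableEq V] (G : SimpleGraph V)
        (E' : Finset (Sym2 V)), ↑E' ⊆ G.edgeSet →
      (Finset.univ.filter fun v : V => ∃ e ∈ E', v ∈ e).card < E'.card →
      5 ≤ E'.card) ∧
    (∀ r : ℕ, 4 ≤ r →
      ∃ E' : Finset (Sym2 (Fin r)), ↑E' ⊆ (⊤ : SimpleGraph (Fin r)).edgeSet ∧
        E'.card = 5 ∧
        (Finset.univ.filter fun v : Fin r => ∃ e ∈ E', v ∈ e).card = 4) ∧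
    (∀ r : ℕ, 4 ≤ r →
      IsLeast {m : ℕ | ∃ E' : Finset (Sym2 (Fin r)),
        ↑E' ⊆ (⊤ : SimpleGraph (Fin r)).edgeSet ∧ E'.card = m ∧
        (Finset.univ.filter fun v : Fin r => ∃ e ∈ E', v ∈ e).card < m} 5) := by
  refine ⟨part_i, part_ii, fun r hr => ⟨?_, ?_⟩⟩
  · obtain ⟨E', h1, h2, h3⟩ := part_ii r hr
    exact ⟨E', h1, h2, by omega⟩
  · rintro m ⟨E', h1, rfl, h3⟩
    exact part_i (Fin r) ⊤ E' h1 h3
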